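/- Let f_i : ℝ^{n_i} → ℝ be differentiable, α-strongly convex (α > 0), with L_i-Lipschitz gradient; let A_i ∈ ℝ^{m×n_i}, c ∈ ℝ^m, ρ > 0, γ > 0, s > 0, and P_i symmetric positive semi-definite. Let c_A > 0 satisfy (∑_i ‖A_iᵀμ‖²)^{1/2} ≥ c_A‖μ‖ for all μ ∈ ℝ^m; set L := max_i L_i², D := ∑_i ‖A_iᵀ‖². Suppose (x*, λ*) satisfies ∇f_i(x_i*) = A_iᵀλ* and ∑_i A_i x_i* = c, x_i⁺ satisfies ∇f_i(x_i⁺) = A_iᵀλ − ρA_iᵀ(A_ix_i⁺ + ∑_{j≠i}A_jx_j − c) + P_i(x_i − x_i⁺) for each i, and λ⁺ = λ − γρ(∑_i A_i x_i⁺ − c). Then (1/(2γρ) − sc_A²)‖λ − λ*‖² + (1/2)∑_i ‖x_i − x_i*‖²_{ρA_iᵀA_i+P_i} + 4sρ²D‖∑_{j=1}^N A_j(x_j − x_j*)‖² ≥ (α − 2Ls)∑_i ‖x_i⁺ − x_i*‖² + (1/(2γρ))‖λ⁺ − λ*‖² + (1/2)∑_i ‖x_i⁺ − x_i*‖²_{ρA_iᵀA_i+P_i}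 + (1/2)∑_i ‖x_i⁺ − x_i‖²_{ρA_iᵀA_i+P_i} − 4s∑_i ‖(ρA_iᵀA_i + P_i)(x_i⁺ − x_i)‖² + ((2−γ)/(2γ²ρ))‖λ⁺ − λ‖² + (1/γ)⟨λ − λ⁺, ∑_i A_i(x_i − x_i⁺)⟩. -/

import Mathlib

open Matrix Finset RealInnerProductSpace

set_option maxHeartbeats 1000000

/-- Matrix-vector multiplication `A x` as a map between Euclidean spaces. -/
noncomputable def mv {a b : ℕ} (A : Matrix (Fin a) (Fin b) ℝ)
    (x : EuclideanSpace ℝ (Fin b)) : EuclideanSpace ℝ (Fin a) :=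
  Matrix.toEuclideanLin A x

/-- Quadratic form `xᵀ M x`. -/
noncomputable def qf {a : ℕ} (M : Matrix (Fin a) (Fin a) ℝ)
    (x : EuclideanSpace ℝ (Fin a)) : ℝ := ⟪x, mv M x⟫

/-- Operator norm of a matrix, viewed as a linear map between Euclidean spaces. -/
noncomputable def opN {a b : ℕ} (A : Matrix (Fin a) (Fin b) ℝ) : ℝ :=
  ‖(LinearMap.toContinuousLinearMap (Matrix.toEuclideanLin A))‖

section Helpers
variable {a b d : ℕ}

lemma mv_sub (A : Matrix (Fin a) (Fin b) ℝ) (x y) : mv A (x - y) = mv A x - mv A y :=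
  map_sub _ _ _

lemma mv_addv (A : Matrix (Fin a) (Fin b) ℝ) (x y) : mv A (x + y) = mv A x + mv A y :=
  map_add _ _ _

lemma mv_madd (A B : Matrix (Fin a) (Fin b) ℝ) (x) : mv (A + B) x = mv A x + mv B x := by
  simp [mv]

lemma mv_msmul (c : ℝ) (A : Matrix (Fin a) (Fin b) ℝ) (x) : mv (c • A) x = c • mv A x := by
  simp [mv]

lemma mv_mul (A : Matrix (Fin a) (Fin b) ℝ) (B : Matrix (Fin b) (Fin d) ℝ) (x) :
    mv (A * B) x = mv A (mv B x) := by
  ext j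
  simp [mv, Matrix.toEuclideanLin_apply, Matrix.mulVec_mulVec]

lemma inner_mv_transpose (A : Matrix (Fin a) (Fin b) ℝ) (y : EuclideanSpace ℝ (Fin a))
    (x : EuclideanSpace ℝ (Fin b)) : ⟪mv Aᵀ y, x⟫ = ⟪y, mv A x⟫ := by
  simp only [mv, Matrix.toEuclideanLin_apply, PiLp.inner_apply, RCLike.inner_apply,
    starRingEnd_apply, star_trivial]
  change x.ofLp ⬝ᵥ (Aᵀ *ᵥ y.ofLp) = (A *ᵥ x.ofLp) ⬝ᵥ y.ofLp
  rw [dotProduct_mulVec, vecMul_transpose]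

lemma inner_mv_transpose' (A : Matrix (Fin a) (Fin b) ℝ) (x : EuclideanSpace ℝ (Fin b))
    (y : EuclideanSpace ℝ (Fin a)) : ⟪x, mv Aᵀ y⟫ = ⟪mv A x, y⟫ := by
  rw [real_inner_comm, inner_mv_transpose, real_inner_comm]

lemma norm_mv_le (A : Matrix (Fin a) (Fin b) ℝ) (x) : ‖mv A x‖ ≤ opN A * ‖x‖ :=
  (LinearMap.toContinuousLinearMap (Matrix.toEuclideanLin A)).le_opNorm x

lemma inner_mv_symm (M : Matrix (Fin a) (Fin a) ℝ) (hM : Mᵀ = M) (x y) :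
    ⟪x, mv M y⟫ = ⟪mv M x, y⟫ := by
  rw [← hM, inner_mv_transpose, hM]

lemma two_inner_mv (M : Matrix (Fin a) (Fin a) ℝ) (hM : Mᵀ = M) (u w) :
    2 * ⟪u, mv M w⟫ = qf M u + qf M w - qf M (u - w) := by
  simp only [qf, mv_sub, inner_sub_left, inner_sub_right]
  rw [inner_mv_symm M hM w u, real_inner_comm (mv M w) u]
  ring

lemma aux1 (γ ρ X S : ℝ) (hγ : γ ≠ 0) (hρ : ρ ≠ 0) (h : 2 * (γ * ρ * X) = S) :
    X = (1 / (2 * γ * ρ)) * S := by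
  rw [← h]
  field_simp

lemma aux2 (γ ρ Cc P3 Y T : ℝ) (hγ : γ ≠ 0) (hρ : ρ ≠ 0) (hT : T = γ * ρ * Y)
    (hCc : Cc = T - 1 / (γ * ρ) * P3) :
    ρ * Y = 1 / γ * Cc + 1 / (γ ^ 2 * ρ) * P3 := by
  subst hCc hT
  field_simp
  ring

lemma aux3 (γ ρ nR : ℝ) (hγ : γ ≠ 0) (hρ : ρ ≠ 0) :
    γ * ρ * nR = 1 / (γ * ρ) * ((γ * ρ) ^ 2 * nR) := by
  field_simp

lemma aux5 (t e l L : ℝ) (ht : 0 ≤ t) (h : t ≤ l * e) (hL : l ^ 2 ≤ L) (he : 0 ≤ e) :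
    t ^ 2 ≤ L * e ^ 2 := by
  nlinarith [mul_self_le_mul_self ht h, mul_le_mul_of_nonneg_right hL (sq_nonneg e)]

lemma aux6 (t r o u : ℝ) (ht : 0 ≤ t) (h : t ≤ r * (o * u)) : t ^ 2 ≤ r ^ 2 * o ^ 2 * u ^ 2 := by
  nlinarith [mul_self_le_mul_self ht h]

lemma aux4 (X a b c e r2 : ℝ) (hX : 0 ≤ X) (ha : 0 ≤ a) (hb : 0 ≤ b) (hc : 0 ≤ c)
    (htri : X ≤ a + b + c) (ha2 : a ^ 2 ≤ e) (hc2 : c ^ 2 ≤ r2) :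
    X ^ 2 ≤ 2 * e + 4 * b ^ 2 + 4 * r2 := by
  nlinarith [mul_self_le_mul_self hX htri, sq_nonneg (a - b - c), sq_nonneg (b - c)]

end Helpers

/-- the intermediate inequality (eq-3-2), prior to applying Cauchy–Schwarz
to the coupling term. -/
theorem stmt14 {N m : ℕ} (hN : 0 < N) (n : Fin N → ℕ)
    (f : (i : Fin N) → EuclideanSpace ℝ (Fin (n i)) → ℝ)
    (g : (i : Fin N) → EuclideanSpace ℝ (Fin (n i)) → EuclideanSpace ℝ (Fin (n i)))
    (hdiff : ∀ i x, HasGradientAt (f i) (g i x) x)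
    (α : ℝ) (hα : 0 < α)
    (hsc : ∀ i x y, f i y ≥ f i x + ⟪y - x, g i x⟫ + α * ‖x - y‖ ^ 2)
    (Li : Fin N → ℝ)
    (hlip : ∀ i x y, ‖g i x - g i y‖ ≤ Li i * ‖x - y‖)
    (A : (i : Fin N) → Matrix (Fin m) (Fin (n i)) ℝ)
    (c : EuclideanSpace ℝ (Fin m))
    (ρ γ s : ℝ) (hρ : 0 < ρ) (hγ : 0 < γ) (hs : 0 < s)
    (P : (i : Fin N) → Matrix (Fin (n i)) (Fin (n i)) ℝ)
    (hP : ∀ i, (P i).PosSemidef)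
    (cA : ℝ) (hcA0 : 0 < cA)
    (hcA : ∀ μ : EuclideanSpace ℝ (Fin m),
      Real.sqrt (∑ i, ‖mv (A i)ᵀ μ‖ ^ 2) ≥ cA * ‖μ‖)
    (L D : ℝ)
    (hL : L = Finset.univ.sup' ⟨⟨0, hN⟩, Finset.mem_univ _⟩ (fun i => (Li i) ^ 2))
    (hD : D = ∑ i, opN (A i)ᵀ ^ 2)
    (xstar : (i : Fin N) → EuclideanSpace ℝ (Fin (n i)))
    (lamstar : EuclideanSpace ℝ (Fin m))
    (hkkt1 : ∀ i, g i (xstar i) = mv (A i)ᵀ lamstar)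
    (hkkt2 : ∑ i, mv (A i) (xstar i) = c)
    (x xp : (i : Fin N) → EuclideanSpace ℝ (Fin (n i)))
    (lam lamp : EuclideanSpace ℝ (Fin m))
    (hopt : ∀ i, g i (xp i) = mv (A i)ᵀ lam
        - ρ • mv (A i)ᵀ (mv (A i) (xp i) + (∑ j ∈ Finset.univ.erase i, mv (A j) (x j)) - c)
        + mv (P i) (x i - xp i))
    (hdual : lamp = lam - (γ * ρ) • ((∑ i, mv (A i) (xp i)) - c)) :
    (1 / (2 * γ * ρ) - s * cA ^ 2) * ‖lam - lamstar‖ ^ 2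
        + (1 / 2) * ∑ i, qf (ρ • ((A i)ᵀ * A i) + P i) (x i - xstar i)
        + 4 * s * ρ ^ 2 * D * ‖∑ j, mv (A j) (x j - xstar j)‖ ^ 2
      ≥ (α - 2 * L * s) * ∑ i, ‖xp i - xstar i‖ ^ 2
        + (1 / (2 * γ * ρ)) * ‖lamp - lamstar‖ ^ 2
        + (1 / 2) * ∑ i, qf (ρ • ((A i)ᵀ * A i) + P i) (xp i - xstar i)
        + (1 / 2) * ∑ i, qf (ρ • ((A i)ᵀ * A i) + P i) (xp i - x i)
        - 4 * s * ∑ i, ‖mv (ρ • ((A i)ᵀ * A i) + P i) (xp i - x i)‖ ^ 2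
        + ((2 - γ) / (2 * γ ^ 2 * ρ)) * ‖lamp - lam‖ ^ 2
        + (1 / γ) * ⟪lam - lamp, ∑ i, mv (A i) (x i - xp i)⟫ := by
  have hγ' : γ ≠ 0 := ne_of_gt hγ
  have hρ' : ρ ≠ 0 := ne_of_gt hρ
  -- symmetry of the M matrices
  have hMsym : ∀ i, (ρ • ((A i)ᵀ * A i) + P i)ᵀ = ρ • ((A i)ᵀ * A i) + P i := by
    intro i
    have h := (hP i).isHermitian
    have hQ : (P i)ᵀ = P i := by
      rw [← Matrix.conjTranspose_eq_transpose_of_trivial]; exact h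
    simp [Matrix.transpose_add, Matrix.transpose_smul, Matrix.transpose_mul, hQ]
  -- ∑ A_j x_j - c = u
  have hu : (∑ j, mv (A j) (x j)) - c = ∑ j, mv (A j) (x j - xstar j) := by
    rw [← hkkt2, ← Finset.sum_sub_distrib]
    exact Finset.sum_congr rfl fun j _ => (mv_sub _ _ _).symm
  -- key gradient identity
  have hgi : ∀ i, g i (xp i) - g i (xstar i)
      = mv (A i)ᵀ (lam - lamstar)
        - mv (ρ • ((A i)ᵀ * A i) + P i) (xp i - x i)
        - ρ • mv (A i)ᵀ (∑ j, mv (A j) (x j - xstar j)) := by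
    intro i
    have h1 : mv (A i) (xp i) + (∑ j ∈ Finset.univ.erase i, mv (A j) (x j)) - c
        = mv (A i) (xp i - x i) + ∑ j, mv (A j) (x j - xstar j) := by
      rw [Finset.sum_erase_eq_sub (Finset.mem_univ i), ← hu, mv_sub]
      abel
    rw [hopt i, hkkt1 i, h1]
    simp only [mv_sub, mv_addv, mv_madd, mv_msmul, mv_mul]
    module
  -- strong monotonicity
  have hmono : ∀ i, α * ‖xp i - xstar i‖ ^ 2
      ≤ ⟪xp i - xstar i, g i (xp i) - g i (xstar i)⟫ := by
    intro i
    have h1 := hsc i (xp i) (xstar i)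
    have h2 := hsc i (xstar i) (xp i)
    have hn : ‖xstar i - xp i‖ = ‖xp i - xstar i‖ := norm_sub_rev _ _
    have e1 : ⟪xstar i - xp i, g i (xp i)⟫ = -⟪xp i - xstar i, g i (xp i)⟫ := by
      rw [← inner_neg_left, neg_sub]
    rw [hn] at h2
    rw [e1] at h1
    rw [inner_sub_right]
    have hnn : 0 ≤ α * ‖xp i - xstar i‖ ^ 2 := by positivity
    linarith
  -- per-i inner product expansion
  have hinner : ∀ i, ⟪xp i - xstar i, g i (xp i) - g i (xstar i)⟫
      = ⟪mv (A i) (xp i - xstar i), lam - lamstar⟫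
        - (1 / 2) * (qf (ρ • ((A i)ᵀ * A i) + P i) (xp i - xstar i)
            + qf (ρ • ((A i)ᵀ * A i) + P i) (xp i - x i)
            - qf (ρ • ((A i)ᵀ * A i) + P i) (x i - xstar i))
        - ρ * ⟪mv (A i) (xp i - xstar i), ∑ j, mv (A j) (x j - xstar j)⟫ := by
    intro i
    have hM := two_inner_mv _ (hMsym i) (xp i - xstar i) (xp i - x i)
    have hd : (xp i - xstar i) - (xp i - x i) = x i - xstar i := by abel
    rw [hd] at hM
    rw [hgi i, inner_sub_right, inner_sub_right, real_inner_smul_right,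
      inner_mv_transpose', inner_mv_transpose']
    linarith
  -- summed inequality
  have hsumineq : α * ∑ i, ‖xp i - xstar i‖ ^ 2
      ≤ ⟪∑ i, mv (A i) (xp i - xstar i), lam - lamstar⟫
        - (1 / 2) * ((∑ i, qf (ρ • ((A i)ᵀ * A i) + P i) (xp i - xstar i))
            + (∑ i, qf (ρ • ((A i)ᵀ * A i) + P i) (xp i - x i))
            - (∑ i, qf (ρ • ((A i)ᵀ * A i) + P i) (x i - xstar i)))
        - ρ * ⟪∑ i, mv (A i) (xp i - xstar i), ∑ j, mv (A j) (x j - xstar j)⟫ := by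
    calc α * ∑ i, ‖xp i - xstar i‖ ^ 2 = ∑ i, α * ‖xp i - xstar i‖ ^ 2 :=
          Finset.mul_sum _ _ _
      _ ≤ ∑ i, ⟪xp i - xstar i, g i (xp i) - g i (xstar i)⟫ :=
          Finset.sum_le_sum fun i _ => hmono i
      _ = _ := by
          rw [Finset.sum_congr rfl fun i _ => hinner i]
          rw [Finset.sum_sub_distrib, Finset.sum_sub_distrib, ← sum_inner, ← Finset.mul_sum,
            ← Finset.mul_sum, ← sum_inner, Finset.sum_sub_distrib, Finset.sum_add_distrib]
  -- dual relation
  have hRt : lam - lamp = (γ * ρ) • (∑ i, mv (A i) (xp i - xstar i)) := by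
    have hRc : (∑ i, mv (A i) (xp i)) - c = ∑ i, mv (A i) (xp i - xstar i) := by
      rw [← hkkt2, ← Finset.sum_sub_distrib]
      exact Finset.sum_congr rfl fun i _ => (mv_sub _ _ _).symm
    rw [hdual, ← hRc]
    abel
  have hnormR : ‖lamp - lam‖ ^ 2 = (γ * ρ) ^ 2 * ‖∑ i, mv (A i) (xp i - xstar i)‖ ^ 2 := by
    rw [norm_sub_rev, hRt, norm_smul, Real.norm_eq_abs, abs_of_pos (by positivity : 0 < γ * ρ),
      mul_pow]
  -- polarization
  have hpol : 2 * ⟪lam - lamp, lam - lamstar⟫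
      = ‖lamp - lam‖ ^ 2 + ‖lam - lamstar‖ ^ 2 - ‖lamp - lamstar‖ ^ 2 := by
    have hid := norm_sub_sq_real (lam - lamp) (lam - lamstar)
    have h1 : (lam - lamp) - (lam - lamstar) = lamstar - lamp := by abel
    rw [h1, norm_sub_rev lamstar lamp, norm_sub_rev lam lamp] at hid
    linarith
  have h2l : ⟪lam - lamp, lam - lamstar⟫
      = γ * ρ * ⟪∑ i, mv (A i) (xp i - xstar i), lam - lamstar⟫ := by
    rw [hRt, real_inner_smul_left]
  have hA' : ⟪∑ i, mv (A i) (xp i - xstar i), lam - lamstar⟫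
      = (1 / (2 * γ * ρ)) * (‖lamp - lam‖ ^ 2 + ‖lam - lamstar‖ ^ 2 - ‖lamp - lamstar‖ ^ 2) :=
    aux1 γ ρ _ _ hγ' hρ' (by linarith)
  -- coupling term
  have hC : ⟪lam - lamp, ∑ i, mv (A i) (x i - xp i)⟫
      = ⟪lam - lamp, ∑ j, mv (A j) (x j - xstar j)⟫ - 1 / (γ * ρ) * ‖lamp - lam‖ ^ 2 := by
    have hsplit : ∑ i, mv (A i) (x i - xp i)
        = (∑ j, mv (A j) (x j - xstar j)) - ∑ i, mv (A i) (xp i - xstar i) := by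
      rw [← Finset.sum_sub_distrib]
      refine Finset.sum_congr rfl fun i _ => ?_
      rw [← mv_sub]
      congr 1
      abel
    have hiR : ⟪lam - lamp, ∑ i, mv (A i) (xp i - xstar i)⟫
        = (γ * ρ) * ‖∑ i, mv (A i) (xp i - xstar i)‖ ^ 2 := by
      rw [hRt, real_inner_smul_left, real_inner_self_eq_norm_sq]
    rw [hsplit, inner_sub_right, hiR, hnormR]
    have := aux3 γ ρ (‖∑ i, mv (A i) (xp i - xstar i)‖ ^ 2) hγ' hρ'
    linarith
  have h2u : ⟪lam - lamp, ∑ j, mv (A j) (x j - xstar j)⟫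
      = γ * ρ * ⟪∑ i, mv (A i) (xp i - xstar i), ∑ j, mv (A j) (x j - xstar j)⟫ := by
    rw [hRt, real_inner_smul_left]
  have hB' : ρ * ⟪∑ i, mv (A i) (xp i - xstar i), ∑ j, mv (A j) (x j - xstar j)⟫
      = 1 / γ * ⟪lam - lamp, ∑ i, mv (A i) (x i - xp i)⟫
        + 1 / (γ ^ 2 * ρ) * ‖lamp - lam‖ ^ 2 :=
    aux2 γ ρ _ _ _ _ hγ' hρ' h2u hC
  -- coefficient identity
  have h7P : ((2 - γ) / (2 * γ ^ 2 * ρ)) * ‖lamp - lam‖ ^ 2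
      = (1 / (γ ^ 2 * ρ)) * ‖lamp - lam‖ ^ 2 - (1 / (2 * γ * ρ)) * ‖lamp - lam‖ ^ 2 := by
    have hco : (2 - γ) / (2 * γ ^ 2 * ρ) = 1 / (γ ^ 2 * ρ) - 1 / (2 * γ * ρ) := by
      field_simp
    rw [hco]
    ring
  -- ★★ : dual gap bound
  have hcAsq : cA ^ 2 * ‖lam - lamstar‖ ^ 2 ≤ ∑ i, ‖mv (A i)ᵀ (lam - lamstar)‖ ^ 2 := by
    have h := hcA (lam - lamstar)
    have hnn : (0:ℝ) ≤ ∑ i, ‖mv (A i)ᵀ (lam - lamstar)‖ ^ 2 :=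
      Finset.sum_nonneg fun i _ => sq_nonneg _
    calc cA ^ 2 * ‖lam - lamstar‖ ^ 2 = (cA * ‖lam - lamstar‖) ^ 2 := by ring
      _ ≤ _ := by
          rw [← Real.sq_sqrt hnn]
          exact pow_le_pow_left₀ (by positivity) h 2
  have hper : ∀ i, ‖mv (A i)ᵀ (lam - lamstar)‖ ^ 2
      ≤ 2 * L * ‖xp i - xstar i‖ ^ 2
        + 4 * ‖mv (ρ • ((A i)ᵀ * A i) + P i) (xp i - x i)‖ ^ 2
        + 4 * ρ ^ 2 * opN (A i)ᵀ ^ 2 * ‖∑ j, mv (A j) (x j - xstar j)‖ ^ 2 := by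
    intro i
    have hre : mv (A i)ᵀ (lam - lamstar)
        = (g i (xp i) - g i (xstar i)) + mv (ρ • ((A i)ᵀ * A i) + P i) (xp i - x i)
          + ρ • mv (A i)ᵀ (∑ j, mv (A j) (x j - xstar j)) := by
      rw [hgi i]; abel
    have h1 : ‖g i (xp i) - g i (xstar i)‖ ≤ Li i * ‖xp i - xstar i‖ := hlip i _ _
    have hLge : (Li i) ^ 2 ≤ L := by
      rw [hL]; exact Finset.le_sup' (fun i => (Li i) ^ 2) (Finset.mem_univ i)
    have h1' : ‖g i (xp i) - g i (xstar i)‖ ^ 2 ≤ L * ‖xp i - xstar i‖ ^ 2 :=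
      aux5 _ _ _ _ (norm_nonneg _) h1 hLge (norm_nonneg _)
    have h3 : ‖ρ • mv (A i)ᵀ (∑ j, mv (A j) (x j - xstar j))‖
        ≤ ρ * (opN (A i)ᵀ * ‖∑ j, mv (A j) (x j - xstar j)‖) := by
      rw [norm_smul, Real.norm_eq_abs, abs_of_pos hρ]
      exact mul_le_mul_of_nonneg_left (norm_mv_le _ _) hρ.le
    have hc2 : ‖ρ • mv (A i)ᵀ (∑ j, mv (A j) (x j - xstar j))‖ ^ 2
        ≤ ρ ^ 2 * opN (A i)ᵀ ^ 2 * ‖∑ j, mv (A j) (x j - xstar j)‖ ^ 2 :=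
      aux6 _ _ _ _ (norm_nonneg _) h3
    have htri : ‖mv (A i)ᵀ (lam - lamstar)‖
        ≤ ‖g i (xp i) - g i (xstar i)‖ + ‖mv (ρ • ((A i)ᵀ * A i) + P i) (xp i - x i)‖
          + ‖ρ • mv (A i)ᵀ (∑ j, mv (A j) (x j - xstar j))‖ := by
      rw [hre]; exact norm_add₃_le
    have := aux4 _ _ _ _ _ _ (norm_nonneg (mv (A i)ᵀ (lam - lamstar)))
      (norm_nonneg _) (norm_nonneg _) (norm_nonneg _) htri h1' hc2
    linarith
  have hsumper : ∑ i, ‖mv (A i)ᵀ (lam - lamstar)‖ ^ 2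
      ≤ 2 * L * (∑ i, ‖xp i - xstar i‖ ^ 2)
        + 4 * (∑ i, ‖mv (ρ • ((A i)ᵀ * A i) + P i) (xp i - x i)‖ ^ 2)
        + 4 * ρ ^ 2 * D * ‖∑ j, mv (A j) (x j - xstar j)‖ ^ 2 := by
    calc ∑ i, ‖mv (A i)ᵀ (lam - lamstar)‖ ^ 2
        ≤ ∑ i, (2 * L * ‖xp i - xstar i‖ ^ 2
            + 4 * ‖mv (ρ • ((A i)ᵀ * A i) + P i) (xp i - x i)‖ ^ 2
            + 4 * ρ ^ 2 * opN (A i)ᵀ ^ 2 * ‖∑ j, mv (A j) (x j - xstar j)‖ ^ 2) :=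
          Finset.sum_le_sum fun i _ => hper i
      _ = ∑ i, (2 * L * ‖xp i - xstar i‖ ^ 2
            + 4 * ‖mv (ρ • ((A i)ᵀ * A i) + P i) (xp i - x i)‖ ^ 2
            + (4 * ρ ^ 2 * ‖∑ j, mv (A j) (x j - xstar j)‖ ^ 2) * opN (A i)ᵀ ^ 2) :=
          Finset.sum_congr rfl fun i _ => by ring
      _ = 2 * L * (∑ i, ‖xp i - xstar i‖ ^ 2)
            + 4 * (∑ i, ‖mv (ρ • ((A i)ᵀ * A i) + P i) (xp i - x i)‖ ^ 2)
            + (4 * ρ ^ 2 * ‖∑ j, mv (A j) (x j - xstar j)‖ ^ 2) * ∑ i, opN (A i)ᵀ ^ 2 := by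
          rw [Finset.sum_add_distrib, Finset.sum_add_distrib, ← Finset.mul_sum, ← Finset.mul_sum,
            ← Finset.mul_sum]
      _ = _ := by rw [hD]; ring
  have hss : s * cA ^ 2 * ‖lam - lamstar‖ ^ 2
      ≤ 2 * L * s * (∑ i, ‖xp i - xstar i‖ ^ 2)
        + 4 * s * (∑ i, ‖mv (ρ • ((A i)ᵀ * A i) + P i) (xp i - x i)‖ ^ 2)
        + 4 * s * ρ ^ 2 * D * ‖∑ j, mv (A j) (x j - xstar j)‖ ^ 2 := by
    have hchain := hcAsq.trans hsumper
    have h := mul_le_mul_of_nonneg_left hchain hs.le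
    linarith [h]
  -- final combination
  linarith [hsumineq, hA', hB', h7P, hss]
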